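/- For 1 < β < 2 and a_j = j^{-β}, one has lim_{x→0+} Φ(x) = +∞, where Φ(x) = (4/x) · Σ_{j=1}^∞ j^{-β} sin²(xj/2) = (2/x) Σ_{j=1}^∞ (1 − cos jx)/j^β. -/

import Mathlib

open Real Filter Set

-- 1 - cos t ≥ t^2/4 for 0 < t ≤ 1
lemma one_sub_cos_ge {t : ℝ} (ht : 0 < t) (ht1 : t ≤ 1) : t ^ 2 / 4 ≤ 1 - Real.cos t := by
  have h2 : Real.cos t = 1 - 2 * Real.sin (t / 2) ^ 2 := by
    have := Real.cos_two_mul (t / 2)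
    have h3 := Real.sin_sq_add_cos_sq (t / 2)
    have ht2 : 2 * (t / 2) = t := by ring
    rw [ht2] at this
    nlinarith
  have hs : t / 2 - (t / 2) ^ 3 / 4 < Real.sin (t / 2) :=
    by have := Real.sin_gt_sub_cube (x := t / 2) (by linarith); nlinarith [pow_pos (by linarith : (0:ℝ) < t / 2) 3]
  have hs2 : (t / 2) ^ 2 ≤ 1 / 4 := by nlinarith
  have hpos : (0:ℝ) < t / 2 - (t / 2) ^ 3 / 4 := by nlinarith
  have hsq : (t / 2 - (t / 2) ^ 3 / 4) ^ 2 ≤ Real.sin (t / 2) ^ 2 := by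
    have := pow_le_pow_left₀ hpos.le hs.le 2
    linarith
  have h4 : (t / 2) ^ 2 / 2 ≤ (t / 2 - (t / 2) ^ 3 / 4) ^ 2 := by
    nlinarith [sq_nonneg (t / 2), hs2, mul_le_mul_of_nonneg_left hs2 (sq_nonneg (t / 2))]
  nlinarith [hsq, h4]

lemma sq_sum_lb (N : ℕ) : (N : ℝ) ^ 3 / 3 ≤ ∑ j ∈ Finset.range N, ((j : ℝ) + 1) ^ 2 := by
  induction N with
  | zero => simp
  | succ n ih =>
    rw [Finset.sum_range_succ]
    push_cast
    push_cast at ih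
    nlinarith [ih, (Nat.cast_nonneg n : (0:ℝ) ≤ (n : ℝ))]

theorem phi_strong_interaction_blowup (β : ℝ) (hβ1 : 1 < β) (hβ2 : β < 2) :
    Filter.Tendsto
      (fun x : ℝ => (2 / x) * ∑' j : ℕ, (1 - Real.cos (x * (j + 1))) / ((j : ℝ) + 1) ^ β)
      (nhdsWithin 0 (Set.Ioi 0)) Filter.atTop := by
  -- the comparison function x^(β-2)/48 tends to atTop
  have hg : Tendsto (fun x : ℝ => x ^ (β - 2) / 48) (nhdsWithin 0 (Set.Ioi 0)) atTop := by
    apply Tendsto.atTop_div_const (by norm_num : (0:ℝ) < 48)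
    have h1 : Tendsto (fun x : ℝ => (x⁻¹) ^ (2 - β)) (nhdsWithin 0 (Set.Ioi 0)) atTop :=
      (tendsto_rpow_atTop (by linarith)).comp tendsto_inv_nhdsGT_zero
    refine h1.congr' ?_
    filter_upwards [self_mem_nhdsWithin] with x hx
    have hx0 : (0:ℝ) < x := hx
    rw [← Real.rpow_neg_one x, ← Real.rpow_mul hx0.le]
    congr 1
    ring
  refine tendsto_atTop_mono' _ ?_ hg
  filter_upwards [Ioo_mem_nhdsGT_of_mem (show (0:ℝ) ∈ Ico (0:ℝ) (1/2) by constructor <;> norm_num)]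
    with x hx
  obtain ⟨hx0, hx12⟩ := hx
  set N := ⌊1 / x⌋₊ with hNdef
  have hx1 : (2:ℝ) ≤ 1 / x := by
    rw [le_div_iff₀ hx0]; linarith
  have hN2 : (N : ℝ) ≤ 1 / x := Nat.floor_le (by positivity)
  have hN1 : 1 / (2 * x) ≤ (N : ℝ) := by
    have := Nat.sub_one_lt_floor (1 / x)
    have : 1 / x - 1 ≤ (N : ℝ) := this.le
    have h : 1 / (2 * x) ≤ 1 / x - 1 := by
      rw [div_sub' (ne_of_gt hx0), div_le_div_iff₀ (by positivity) hx0]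
      nlinarith
    linarith
  have hNpos : (0:ℝ) < N := by
    have : (0:ℝ) < 1 / (2 * x) := by positivity
    linarith
  -- summability
  have hsum0 : Summable (fun j : ℕ => (((j : ℝ) + 1) ^ β)⁻¹) := by
    have h := (Real.summable_nat_rpow_inv (p := β)).mpr hβ1
    have := (summable_nat_add_iff 1).mpr h
    refine this.congr fun j => ?_
    push_cast
    ring_nf
  have hsum : Summable (fun j : ℕ => (1 - Real.cos (x * (j + 1))) / ((j : ℝ) + 1) ^ β) := by
    refine Summable.of_nonneg_of_le (fun j => ?_) (fun j => ?_) (hsum0.mul_left 2)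
    · exact div_nonneg (sub_nonneg.mpr (Real.cos_le_one _))
        (Real.rpow_nonneg (by positivity) _)
    · rw [div_eq_mul_inv]
      exact mul_le_mul_of_nonneg_right
        (by nlinarith [Real.neg_one_le_cos (x * ((j : ℝ) + 1))]) (by positivity)
  -- each term lower bound, for j < N
  have hterm : ∀ j ∈ Finset.range N,
      x ^ 2 / 4 * ((j : ℝ) + 1) ^ 2 * ((N : ℝ) ^ β)⁻¹
        ≤ (1 - Real.cos (x * (j + 1))) / ((j : ℝ) + 1) ^ β := by
    intro j hj
    rw [Finset.mem_range] at hj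
    have hj1 : ((j : ℝ) + 1) ≤ (N : ℝ) := by
      have : (j : ℝ) + 1 ≤ (N : ℕ) := by exact_mod_cast Nat.succ_le_of_lt hj
      exact_mod_cast this
    have ht0 : 0 < x * ((j : ℝ) + 1) := by positivity
    have ht1 : x * ((j : ℝ) + 1) ≤ 1 := by
      calc x * ((j : ℝ) + 1) ≤ x * (1 / x) := by
            have := hj1.trans hN2
            gcongr
          _ = 1 := by field_simp
    have hcos := one_sub_cos_ge ht0 ht1
    have hden : ((j : ℝ) + 1) ^ β ≤ (N : ℝ) ^ β :=
      Real.rpow_le_rpow (by positivity) hj1 (by linarith)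
    have hdenpos : (0:ℝ) < ((j : ℝ) + 1) ^ β := Real.rpow_pos_of_pos (by positivity) _
    have hNp : (0:ℝ) < (N : ℝ) ^ β := Real.rpow_pos_of_pos hNpos _
    calc x ^ 2 / 4 * ((j : ℝ) + 1) ^ 2 * ((N : ℝ) ^ β)⁻¹
        = ((x * ((j : ℝ) + 1)) ^ 2 / 4) / (N : ℝ) ^ β := by ring
      _ ≤ (1 - Real.cos (x * ((j : ℝ) + 1))) / (N : ℝ) ^ β := by gcongr
      _ ≤ (1 - Real.cos (x * ((j : ℝ) + 1))) / ((j : ℝ) + 1) ^ β := by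
          apply div_le_div_of_nonneg_left _ hdenpos hden
          nlinarith
      _ = (1 - Real.cos (x * (j + 1))) / ((j : ℝ) + 1) ^ β := by norm_num
  -- partial sum lower bound
  have hpartial : ∑ j ∈ Finset.range N, (x ^ 2 / 4 * ((j : ℝ) + 1) ^ 2 * ((N : ℝ) ^ β)⁻¹)
      ≤ ∑' j : ℕ, (1 - Real.cos (x * (j + 1))) / ((j : ℝ) + 1) ^ β := by
    refine le_trans (Finset.sum_le_sum hterm) ?_
    apply Summable.sum_le_tsum _ (fun j _ => ?_) hsum
    exact div_nonneg (sub_nonneg.mpr (Real.cos_le_one _)) (Real.rpow_nonneg (by positivity) _)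
  have hsumval : x ^ 2 / 4 * ((N : ℝ) ^ 3 / 3) * ((N : ℝ) ^ β)⁻¹
      ≤ ∑ j ∈ Finset.range N, (x ^ 2 / 4 * ((j : ℝ) + 1) ^ 2 * ((N : ℝ) ^ β)⁻¹) := by
    rw [← Finset.sum_mul, ← Finset.mul_sum]
    have := sq_sum_lb N
    have hNp : (0:ℝ) < ((N : ℝ) ^ β)⁻¹ := by
      have := Real.rpow_pos_of_pos hNpos β; positivity
    gcongr
  -- now combine
  have hΦ : x ^ 2 / 4 * ((N : ℝ) ^ 3 / 3) * ((N : ℝ) ^ β)⁻¹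
      ≤ ∑' j : ℕ, (1 - Real.cos (x * (j + 1))) / ((j : ℝ) + 1) ^ β := le_trans hsumval hpartial
  have hNcube : (1 / (2 * x)) ^ 3 ≤ (N : ℝ) ^ 3 := by gcongr <;> positivity
  have hNrpow : (N : ℝ) ^ β ≤ (1 / x) ^ β :=
    Real.rpow_le_rpow hNpos.le hN2 (by linarith)
  have hxb : ((1 / x : ℝ)) ^ β = (x ^ β)⁻¹ := by
    rw [one_div, Real.inv_rpow hx0.le]
  have hinv : x ^ β ≤ ((N : ℝ) ^ β)⁻¹ := by
    have h1 : (N : ℝ) ^ β ≤ (x ^ β)⁻¹ := by rw [← hxb]; exact hNrpow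
    have h2 : ((x ^ β)⁻¹)⁻¹ ≤ ((N : ℝ) ^ β)⁻¹ :=
      inv_anti₀ (Real.rpow_pos_of_pos hNpos β) h1
    simpa using h2
  have key1 : x / 6 * (1 / (2 * x)) ^ 3 * x ^ β ≤ x / 6 * (N : ℝ) ^ 3 * ((N : ℝ) ^ β)⁻¹ := by
    have h := mul_le_mul_of_nonneg_left
      (mul_le_mul hNcube hinv (Real.rpow_pos_of_pos hx0 β).le (by positivity))
      (by positivity : (0:ℝ) ≤ x / 6)
    rw [mul_assoc, mul_assoc]
    exact h
  have key2 : x / 6 * (1 / (2 * x)) ^ 3 * x ^ β = x ^ (β - 2) / 48 := by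
    rw [Real.rpow_sub hx0]
    have h2 : x ^ (2 : ℝ) = x ^ (2 : ℕ) := by
      rw [← Real.rpow_natCast]; norm_num
    rw [h2]
    field_simp
    ring
  have key3 : (2 / x) * (x ^ 2 / 4 * ((N : ℝ) ^ 3 / 3) * ((N : ℝ) ^ β)⁻¹)
      = x / 6 * (N : ℝ) ^ 3 * ((N : ℝ) ^ β)⁻¹ := by
    field_simp
    ring
  calc x ^ (β - 2) / 48 = x / 6 * (1 / (2 * x)) ^ 3 * x ^ β := key2.symm
    _ ≤ x / 6 * (N : ℝ) ^ 3 * ((N : ℝ) ^ β)⁻¹ := key1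
    _ = (2 / x) * (x ^ 2 / 4 * ((N : ℝ) ^ 3 / 3) * ((N : ℝ) ^ β)⁻¹) := key3.symm
    _ ≤ (2 / x) * ∑' j : ℕ, (1 - Real.cos (x * (j + 1))) / ((j : ℝ) + 1) ^ β := by
        apply mul_le_mul_of_nonneg_left hΦ
        positivity
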